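/- arXiv:1501.05249 — 4 statements merged into one kernel-verified Lean document; each statement's English description precedes it below -/
import Mathlib

section
/- Let f : [R₀, ∞) → ℝ with R₀ > 1 be a positive, strictly increasing C² function satisfying f''(r) = a(r)² f(r), where a(r)² ≥ (1+ε)/(r² log r) for some ε > 0 and all r ≥ R₀. Then for any 0 < ε̃ < ε there exists R₁ ≥ R₀ such that for all r ≥ R₁ one has f'(r)/f(r) ≥ 1/r + (1+ε̃)/(r log r). -/
open Real Set

private lemma mono_aux {g g' : ℝ → ℝ} {A : ℝ} (hg : ∀ r ≥ A, HasDerivAt g (g' r) r)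
    (h0 : ∀ r ≥ A, 0 ≤ g' r) : MonotoneOn g (Ici A) := by
  apply monotoneOn_of_deriv_nonneg (convex_Ici A)
  · exact fun r hr => (hg r hr).continuousAt.continuousWithinAt
  · intro r hr
    rw [interior_Ici] at hr
    exact (hg r hr.le).differentiableAt.differentiableWithinAt
  · intro r hr
    rw [interior_Ici] at hr
    rw [(hg r hr.le).deriv]
    exact h0 r hr.le

private lemma anti_aux {g g' : ℝ → ℝ} {A B : ℝ} (hg : ∀ r ∈ Icc A B, HasDerivAt g (g' r) r)
    (h0 : ∀ r ∈ Ioo A B, g' r ≤ 0) : AntitoneOn g (Icc A B) := by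
  apply antitoneOn_of_deriv_nonpos (convex_Icc A B)
  · exact fun r hr => (hg r hr).continuousAt.continuousWithinAt
  · intro r hr
    rw [interior_Icc] at hr
    exact (hg r ⟨hr.1.le, hr.2.le⟩).differentiableAt.differentiableWithinAt
  · intro r hr
    rw [interior_Icc] at hr
    rw [(hg r ⟨hr.1.le, hr.2.le⟩).deriv]
    exact h0 r hr

private noncomputable def FF (q r : ℝ) : ℝ := r * Real.log r ^ (1 + q)
private noncomputable def FF' (q r : ℝ) : ℝ := Real.log r ^ (1 + q) + (1 + q) * Real.log r ^ q
private noncomputable def FF'' (q r : ℝ) : ℝ := r⁻¹ * (1 + q) * Real.log r ^ (1 + q - 1) +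
    (1 + q) * (r⁻¹ * q * Real.log r ^ (q - 1))

private lemma FF''_eq {q r : ℝ} (hr : 1 < r) :
    FF'' q r = (1 + q) * Real.log r ^ q * r⁻¹ + (1 + q) * q * Real.log r ^ (q - 1) * r⁻¹ := by
  unfold FF''
  have e1 : (1 : ℝ) + q - 1 = q := by ring
  rw [e1]; ring

private lemma hasDerivAt_FF {q r : ℝ} (hr : 1 < r) : HasDerivAt (FF q) (FF' q r) r := by
  have hL : 0 < Real.log r := Real.log_pos hr
  have hr0 : r ≠ 0 := by positivity
  have hlog : HasDerivAt Real.log r⁻¹ r := Real.hasDerivAt_log hr0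
  have hpow := hlog.rpow_const (p := 1 + q) (Or.inl hL.ne')
  have h := (hasDerivAt_id r).mul hpow
  have hval : FF' q r = 1 * Real.log r ^ (1 + q) + id r * (r⁻¹ * (1 + q) * Real.log r ^ (1 + q - 1)) := by
    have e1 : (1 : ℝ) + q - 1 = q := by ring
    rw [e1]
    unfold FF'
    simp only [id_eq]
    field_simp
  rw [hval]
  exact h

private lemma hasDerivAt_FF' {q r : ℝ} (hr : 1 < r) : HasDerivAt (FF' q) (FF'' q r) r := by
  have hL : 0 < Real.log r := Real.log_pos hr
  have hr0 : r ≠ 0 := by positivity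
  have hlog : HasDerivAt Real.log r⁻¹ r := Real.hasDerivAt_log hr0
  have hpow := hlog.rpow_const (p := 1 + q) (Or.inl hL.ne')
  have hpowq := hlog.rpow_const (p := q) (Or.inl hL.ne')
  exact hpow.add (hpowq.const_mul (1 + q))

set_option maxHeartbeats 1000000 in
theorem stmt_0 (R₀ ε : ℝ) (hR₀ : 1 < R₀) (hε : 0 < ε) (f f' f'' a : ℝ → ℝ)
    (hd1 : ∀ r ≥ R₀, HasDerivAt f (f' r) r)
    (hd2 : ∀ r ≥ R₀, HasDerivAt f' (f'' r) r)
    (hpos : ∀ r ≥ R₀, 0 < f r)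
    (hmono : StrictMonoOn f (Set.Ici R₀))
    (hode : ∀ r ≥ R₀, f'' r = (a r) ^ 2 * f r)
    (ha : ∀ r ≥ R₀, (1 + ε) / (r ^ 2 * Real.log r) ≤ (a r) ^ 2)
    (ε' : ℝ) (hε'0 : 0 < ε') (hε' : ε' < ε) :
    ∃ R₁ ≥ R₀, ∀ r ≥ R₁, 1 / r + (1 + ε') / (r * Real.log r) ≤ f' r / f r := by
  -- positivity of f'' and monotonicity of f'
  have hf''nn : ∀ r ≥ R₀, 0 ≤ f'' r := fun r hr => by
    rw [hode r hr]; exact mul_nonneg (sq_nonneg _) (hpos r hr).le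
  have hf'mono : MonotoneOn f' (Ici R₀) := mono_aux hd2 hf''nn
  set δ := f' (R₀ + 1) with hδdef
  have hδpos : 0 < δ := by
    by_contra h
    push_neg at h
    have hanti : AntitoneOn f (Icc R₀ (R₀ + 1)) := by
      apply anti_aux (fun r hr => hd1 r hr.1)
      intro r hr
      exact le_trans (hf'mono (mem_Ici.2 hr.1.le) (mem_Ici.2 (by linarith)) hr.2.le) h
    have h1 : f R₀ < f (R₀ + 1) :=
      hmono (mem_Ici.2 le_rfl) (mem_Ici.2 (by linarith)) (lt_add_one R₀)
    have h2 : f (R₀ + 1) ≤ f R₀ :=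
      hanti ⟨le_rfl, by linarith⟩ ⟨by linarith, le_rfl⟩ (by linarith)
    linarith
  have hf'lb : ∀ r ≥ R₀ + 1, δ ≤ f' r := fun r hr =>
    hf'mono (mem_Ici.2 (by linarith)) (mem_Ici.2 (by linarith)) hr
  -- linear lower bound on f
  have hflin : MonotoneOn (fun r => f r - δ * r) (Ici (R₀ + 1)) := by
    apply mono_aux (g' := fun r => f' r - δ)
    · intro r hr
      exact (hd1 r (by linarith)).sub (by simpa using (hasDerivAt_id r).const_mul δ)
    · intro r hr
      exact sub_nonneg.2 (hf'lb r hr)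
  have hflb : ∀ r ≥ 2 * (R₀ + 1), δ / 2 * r ≤ f r := by
    intro r hr
    have h1 := hflin (mem_Ici.2 le_rfl) (mem_Ici.2 (by linarith)) (by linarith)
    have h2 := hpos (R₀ + 1) (by linarith)
    simp only at h1
    nlinarith
  -- thresholds
  set κ := δ * (ε - ε') / 4 with hκdef
  have hκpos : 0 < κ := by
    have : 0 < ε - ε' := by linarith
    positivity
  set M := max 1 (2 * (1 + ε') * ε' / (ε - ε')) with hMdef
  set R₃ := max (2 * (R₀ + 1)) (Real.exp M) with hR₃def
  have hR₃facts : ∀ r ≥ R₃, R₀ ≤ r ∧ 2 * (R₀ + 1) ≤ r ∧ 1 < r ∧ 1 ≤ Real.log r ∧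
      2 * (1 + ε') * ε' / (ε - ε') ≤ Real.log r := by
    intro r hr
    have h2 : 2 * (R₀ + 1) ≤ r := le_trans (le_max_left _ _) hr
    have hexp : Real.exp M ≤ r := le_trans (le_max_right _ _) hr
    have hr1 : 1 < r := by linarith
    have hM : M ≤ Real.log r := (Real.le_log_iff_exp_le (by linarith)).2 hexp
    refine ⟨by linarith, h2, hr1, ?_, ?_⟩
    · exact le_trans (le_max_left _ _) hM
    · exact le_trans (le_max_right _ _) hM
  -- the Wronskian-type function
  set W := fun r => f' r * FF ε' r - f r * FF' ε' r with hWdef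
  have hWderiv : ∀ r ≥ R₃, HasDerivAt W (f'' r * FF ε' r - f r * FF'' ε' r) r := by
    intro r hr
    obtain ⟨hrR0, -, hr1, -, -⟩ := hR₃facts r hr
    have h1 := (hd2 r hrR0).mul (hasDerivAt_FF (q := ε') hr1)
    have h2 := (hd1 r hrR0).mul (hasDerivAt_FF' (q := ε') hr1)
    have h3 := h1.sub h2
    exact h3.congr_deriv (by ring)
  -- key lower bound on the derivative of W
  have hkey : ∀ r ≥ R₃, κ ≤ f'' r * FF ε' r - f r * FF'' ε' r := by
    intro r hr
    obtain ⟨hrR0, hr2, hr1, hL1, hLM⟩ := hR₃facts r hr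
    have hrpos : (0:ℝ) < r := by linarith
    have hLpos : 0 < Real.log r := by linarith
    set L := Real.log r with hLdef
    set A := L ^ (ε' - 1) with hAdef
    have hApos : 0 < A := Real.rpow_pos_of_pos hLpos _
    have eL : L ^ ε' = A * L := by
      rw [hAdef, ← Real.rpow_add_one hLpos.ne' (ε' - 1)]
      norm_num
    have e2 : L ^ (1 + ε') = A * L * L := by
      rw [show (1:ℝ) + ε' = ε' + 1 by ring, Real.rpow_add_one hLpos.ne', eL]
    have hAL1 : 1 ≤ A * L := by
      rw [← eL]
      calc (1:ℝ) = 1 ^ ε' := (Real.one_rpow ε').symm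
        _ ≤ L ^ ε' := Real.rpow_le_rpow zero_le_one hL1 hε'0.le
    have hfr : 0 < f r := hpos r hrR0
    have hflb' : δ / 2 * r ≤ f r := hflb r hr2
    have hFpos : 0 < FF ε' r := by
      rw [FF, e2]; positivity
    have ha' := ha r hrR0
    have hstep1 : (1 + ε) / (r ^ 2 * L) * (f r * FF ε' r) ≤ f'' r * FF ε' r := by
      rw [hode r hrR0]
      calc (1 + ε) / (r ^ 2 * L) * (f r * FF ε' r) ≤ a r ^ 2 * (f r * FF ε' r) :=
            mul_le_mul_of_nonneg_right ha' (by positivity)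
        _ = a r ^ 2 * f r * FF ε' r := by ring
    have hstep2 : (1 + ε) / (r ^ 2 * L) * (f r * FF ε' r) = (1 + ε) * (f r * A * L) / r := by
      rw [FF, e2]
      field_simp
    have hFF'' : f r * FF'' ε' r = f r * A / r * ((1 + ε') * L + (1 + ε') * ε') := by
      rw [FF''_eq hr1]
      rw [show L ^ ε' = A * L from eL, show L ^ (ε' - 1) = A from rfl]
      field_simp
    -- gap inequality
    have hgap : 2 * (1 + ε') * ε' ≤ L * (ε - ε') := by
      rw [div_le_iff₀ (by linarith : (0:ℝ) < ε - ε')] at hLM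
      linarith
    have hB : δ / 2 * A ≤ f r * A / r := by
      rw [le_div_iff₀ hrpos]
      nlinarith [mul_le_mul_of_nonneg_right hflb' hApos.le]
    have hmain : κ ≤ f r * A / r * ((ε - ε') / 2 * L) := by
      calc κ = δ * (ε - ε') / 4 := rfl
        _ ≤ δ * (ε - ε') / 4 * (A * L) := le_mul_of_one_le_right hκpos.le hAL1
        _ = δ / 2 * A * ((ε - ε') / 2 * L) := by ring
        _ ≤ f r * A / r * ((ε - ε') / 2 * L) := by
            apply mul_le_mul_of_nonneg_right hB
            nlinarith
    have hBnn : 0 ≤ f r * A / r := by positivity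
    calc κ ≤ f r * A / r * ((ε - ε') / 2 * L) := hmain
      _ ≤ f r * A / r * ((ε - ε') * L - (1 + ε') * ε') := by
          apply mul_le_mul_of_nonneg_left _ hBnn
          nlinarith
      _ = (1 + ε) * (f r * A * L) / r - f r * A / r * ((1 + ε') * L + (1 + ε') * ε') := by
          field_simp; ring
      _ ≤ f'' r * FF ε' r - f r * FF'' ε' r := by
          rw [hFF'']
          have := le_trans (le_of_eq hstep2.symm) hstep1
          linarith
  -- W grows at least linearly
  have hVmono : MonotoneOn (fun r => W r - κ * r) (Ici R₃) := by
    apply mono_aux (g' := fun r => (f'' r * FF ε' r - f r * FF'' ε' r) - κ)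
    · intro r hr
      exact (hWderiv r hr).sub (by simpa using (hasDerivAt_id r).const_mul κ)
    · intro r hr
      exact sub_nonneg.2 (hkey r hr)
  have hWgrow : ∀ r ≥ R₃, W R₃ + κ * (r - R₃) ≤ W r := by
    intro r hr
    have := hVmono (mem_Ici.2 le_rfl) (mem_Ici.2 hr) hr
    simp only at this
    linarith
  -- choose R₁
  refine ⟨R₃ + (|W R₃| + 1) / κ, ?_, ?_⟩
  · have h1 : R₀ ≤ R₃ := by
      have := le_max_left (2 * (R₀ + 1)) (Real.exp M)
      rw [← hR₃def] at this
      linarith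
    have h2 : 0 ≤ (|W R₃| + 1) / κ := by positivity
    linarith
  · intro r hr
    have hR₃r : R₃ ≤ r := by
      have : 0 ≤ (|W R₃| + 1) / κ := by positivity
      linarith
    obtain ⟨hrR0, hr2, hr1, hL1, hLM⟩ := hR₃facts r hR₃r
    have hrpos : (0:ℝ) < r := by linarith
    have hLpos : 0 < Real.log r := by linarith
    have hW0 : 0 ≤ W r := by
      have h1 := hWgrow r hR₃r
      have h2 : |W R₃| + 1 ≤ κ * (r - R₃) := by
        have h4 : (|W R₃| + 1) / κ ≤ r - R₃ := by linarith
        rw [div_le_iff₀ hκpos] at h4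
        linarith [h4, mul_comm (|W R₃| + 1) κ]
      have h3 : -W R₃ ≤ |W R₃| := neg_le_abs _
      linarith
    have hfr : 0 < f r := hpos r hrR0
    set L := Real.log r with hLdef
    set A := L ^ (ε' - 1) with hAdef
    have hApos : 0 < A := Real.rpow_pos_of_pos hLpos _
    have eL : L ^ ε' = A * L := by
      rw [hAdef, ← Real.rpow_add_one hLpos.ne' (ε' - 1)]
      norm_num
    have e2 : L ^ (1 + ε') = A * L * L := by
      rw [show (1:ℝ) + ε' = ε' + 1 by ring, Real.rpow_add_one hLpos.ne', eL]
    have hFpos : 0 < FF ε' r := by rw [FF, e2]; positivity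
    have hratio : FF' ε' r / FF ε' r = 1 / r + (1 + ε') / (r * L) := by
      rw [FF', FF, e2, eL]
      field_simp
    rw [← hratio]
    rw [div_le_div_iff₀ hFpos hfr]
    have : f r * FF' ε' r ≤ f' r * FF ε' r := by
      have := hW0
      rw [hWdef] at this
      simp only at this
      linarith
    linarith [this]
end

section
/- Let f : [R₀, ∞) → ℝ with R₀ > 1 be a positive, strictly increasing C² function satisfying f''(r) = a(r)² f(r), where a(r)² ≥ (1+ε)/(r² log r) for some ε > 0 and all r ≥ R₀. Then for any 0 < ε̃ < ε there exists R₁ ≥ R₀ such that f(r) ≥ r (log r)^{1+ε̃} for all r ≥ R₁. -/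
open Real Set Filter

private lemma logRpowDeriv (q : ℝ) {x : ℝ} (hx : 1 < x) :
    HasDerivAt (fun r => Real.log r ^ q) (q * Real.log x ^ (q - 1) * x⁻¹) x := by
  have hx0 : x ≠ 0 := by linarith
  have hlog : (0:ℝ) < Real.log x := Real.log_pos hx
  have h := (Real.hasDerivAt_rpow_const (x := Real.log x) (p := q)
      (Or.inl hlog.ne')).comp x (Real.hasDerivAt_log hx0)
  simpa [Function.comp_def, mul_comm, mul_assoc] using h

private lemma gDeriv (q : ℝ) {x : ℝ} (hx : 1 < x) :
    HasDerivAt (fun r => r * Real.log r ^ q)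
      (Real.log x ^ q + q * Real.log x ^ (q - 1)) x := by
  have hx0 : x ≠ 0 := by linarith
  have h := (hasDerivAt_id x).mul (logRpowDeriv q hx)
  simp only [id] at h
  have e : (1:ℝ) * Real.log x ^ q + x * (q * Real.log x ^ (q - 1) * x⁻¹)
      = Real.log x ^ q + q * Real.log x ^ (q - 1) := by
    field_simp
  rw [e] at h
  exact h

private lemma monoOn_of_hasDerivAt {F F' : ℝ → ℝ} {A : ℝ}
    (hF : ∀ x ∈ Ici A, HasDerivAt F (F' x) x)
    (h0 : ∀ x ∈ Ici A, 0 ≤ F' x) : MonotoneOn F (Ici A) := by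
  apply monotoneOn_of_deriv_nonneg (convex_Ici A)
  · exact fun x hx => (hF x hx).continuousAt.continuousWithinAt
  · intro x hx
    rw [interior_Ici] at hx
    exact (hF x (mem_Ici.mpr (le_of_lt hx))).differentiableAt.differentiableWithinAt
  · intro x hx
    rw [interior_Ici] at hx
    rw [(hF x (mem_Ici.mpr (le_of_lt hx))).deriv]
    exact h0 x (mem_Ici.mpr (le_of_lt hx))

set_option maxHeartbeats 1000000 in
theorem stmt_1 (R₀ ε : ℝ) (hR₀ : 1 < R₀) (hε : 0 < ε) (f f' f'' a : ℝ → ℝ)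
    (hd1 : ∀ r ≥ R₀, HasDerivAt f (f' r) r)
    (hd2 : ∀ r ≥ R₀, HasDerivAt f' (f'' r) r)
    (hpos : ∀ r ≥ R₀, 0 < f r)
    (hmono : StrictMonoOn f (Set.Ici R₀))
    (hode : ∀ r ≥ R₀, f'' r = (a r) ^ 2 * f r)
    (ha : ∀ r ≥ R₀, (1 + ε) / (r ^ 2 * Real.log r) ≤ (a r) ^ 2)
    (ε' : ℝ) (hε'0 : 0 < ε') (hε' : ε' < ε) :
    ∃ R₁ ≥ R₀, ∀ r ≥ R₁, r * (Real.log r) ^ (1 + ε') ≤ f r := by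
  obtain ⟨e2, he2a, he2b, he2pos⟩ : ∃ e2, ε' < e2 ∧ e2 < ε ∧ 0 < e2 :=
    ⟨(ε' + ε) / 2, by linarith, by linarith, by linarith⟩
  obtain ⟨δ, hδdef⟩ : ∃ δ, δ = (ε - e2) / 2 := ⟨_, rfl⟩
  have hδpos : 0 < δ := by rw [hδdef]; linarith
  obtain ⟨m, hmdef⟩ : ∃ m, m = f R₀ := ⟨_, rfl⟩
  have hm : 0 < m := hmdef ▸ hpos R₀ le_rfl
  have hfm : ∀ r, R₀ ≤ r → m ≤ f r := fun r hr =>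
    hmdef ▸ hmono.monotoneOn self_mem_Ici hr hr
  obtain ⟨K, hKdef⟩ : ∃ K, K = m * δ / e2 := ⟨_, rfl⟩
  have hKpos : 0 < K := by rw [hKdef]; positivity
  have hKe2 : K * e2 = m * δ := by
    rw [hKdef]; field_simp
  obtain ⟨R₂, hR₂def⟩ : ∃ R₂, R₂ = max (max R₀ (Real.exp 1))
      (Real.exp (2 * (1 + e2) * e2 / (ε - e2))) := ⟨_, rfl⟩
  have hR₂R₀ : R₀ ≤ R₂ := hR₂def ▸ le_trans (le_max_left _ _) (le_max_left _ _)
  have hexp1 : (2:ℝ) ≤ Real.exp 1 := by have := Real.add_one_le_exp 1; linarith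
  have hR₂1 : 1 < R₂ := lt_of_lt_of_le (by linarith)
    (hR₂def ▸ le_trans (le_max_right _ _) (le_max_left _ _))
  have hfacts : ∀ x, R₂ ≤ x → 1 < x ∧ R₀ ≤ x ∧ 1 ≤ Real.log x ∧
      2 * (1 + e2) * e2 / (ε - e2) ≤ Real.log x := by
    intro x hx
    have hx1 : 1 < x := lt_of_lt_of_le hR₂1 hx
    have hx0 : 0 < x := by linarith
    refine ⟨hx1, le_trans hR₂R₀ hx, ?_, ?_⟩
    · rw [Real.le_log_iff_exp_le hx0]
      exact le_trans (hR₂def ▸ le_trans (le_max_right _ _) (le_max_left _ _)) hx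
    · rw [Real.le_log_iff_exp_le hx0]
      exact le_trans (hR₂def ▸ le_max_right _ _) hx
  -- the key pointwise inequality
  have key : ∀ x, R₂ ≤ x →
      m * δ * (Real.log x ^ (e2 - 1) * x⁻¹) ≤
      f x * (a x ^ 2 * (x * Real.log x ^ (1 + e2)) -
        ((1 + e2) * Real.log x ^ e2 * x⁻¹ +
          (1 + e2) * (e2 * Real.log x ^ (e2 - 1) * x⁻¹))) := by
    intro x hx
    obtain ⟨hx1, hxR₀, hL1, hLbig⟩ := hfacts x hx
    have hx0 : (0:ℝ) < x := by linarith
    have hLpos : 0 < Real.log x := Real.log_pos hx1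
    set L : ℝ := Real.log x with hLdef
    set t : ℝ := L ^ (e2 - 1) with htdef
    have htpos : 0 < t := Real.rpow_pos_of_pos hLpos _
    have hA : L ^ e2 = L * t := by
      rw [htdef]
      rw [show e2 = 1 + (e2 - 1) by ring, Real.rpow_add hLpos, Real.rpow_one,
        show 1 + (e2 - 1) - 1 = e2 - 1 by ring]
    have hB : L ^ (1 + e2) = L * (L * t) := by
      rw [Real.rpow_add hLpos, Real.rpow_one, hA]
    clear_value t
    clear_value L
    rw [hB, hA]
    have haG : (1 + ε) * (L * t) * x⁻¹ ≤ a x ^ 2 * (x * (L * (L * t))) := by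
      have h1 : (1 + ε) / (x ^ 2 * L) * (x * (L * (L * t))) ≤
          a x ^ 2 * (x * (L * (L * t))) := by
        have := ha x hxR₀
        rw [← hLdef] at this
        exact mul_le_mul_of_nonneg_right this (by positivity)
      calc (1 + ε) * (L * t) * x⁻¹
          = (1 + ε) / (x ^ 2 * L) * (x * (L * (L * t))) := by
            field_simp
        _ ≤ _ := h1
    have hδL : (1 + e2) * e2 ≤ δ * L := by
      have h2 := (div_le_iff₀ (by linarith : (0:ℝ) < ε - e2)).1 hLbig
      rw [hδdef]; nlinarith
    have htx : (0:ℝ) < t * x⁻¹ := by positivity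
    have hfx := hfm x hxR₀
    have hfx0 := hpos x hxR₀
    have step : δ * (t * x⁻¹) ≤
        a x ^ 2 * (x * (L * (L * t))) -
          ((1 + e2) * (L * t) * x⁻¹ + (1 + e2) * (e2 * t * x⁻¹)) := by
      have e1 : (1 + e2) * e2 * (t * x⁻¹) ≤ δ * L * (t * x⁻¹) :=
        mul_le_mul_of_nonneg_right hδL htx.le
      have e3 : δ * (t * x⁻¹) ≤ δ * L * (t * x⁻¹) :=
        mul_le_mul_of_nonneg_right (by nlinarith : δ ≤ δ * L) htx.le
      have hring : (1 + ε) * (L * t) * x⁻¹ - (1 + e2) * (L * t) * x⁻¹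
          = 2 * (δ * L * (t * x⁻¹)) := by rw [hδdef]; ring
      linarith [haG, e1, e3, hring]
    have hQ0 : 0 ≤ a x ^ 2 * (x * (L * (L * t))) -
        ((1 + e2) * (L * t) * x⁻¹ + (1 + e2) * (e2 * t * x⁻¹)) :=
      le_trans (by positivity) step
    have final : m * (δ * (t * x⁻¹)) ≤ f x * (a x ^ 2 * (x * (L * (L * t))) -
        ((1 + e2) * (L * t) * x⁻¹ + (1 + e2) * (e2 * t * x⁻¹))) :=
      mul_le_mul hfx step (by positivity) hfx0.le
    linarith [final]
  -- derivative of Ψ = W - K log^e2 and its monotonicity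
  have hΨderiv : ∀ x ∈ Ici R₂, HasDerivAt
      (fun r => f' r * (r * Real.log r ^ (1 + e2)) -
        f r * (Real.log r ^ (1 + e2) + (1 + e2) * Real.log r ^ e2) -
        K * Real.log r ^ e2)
      ((f'' x * (x * Real.log x ^ (1 + e2)) +
        f' x * (Real.log x ^ (1 + e2) + (1 + e2) * Real.log x ^ ((1 + e2) - 1))) -
       (f' x * (Real.log x ^ (1 + e2) + (1 + e2) * Real.log x ^ e2) +
        f x * ((1 + e2) * Real.log x ^ ((1 + e2) - 1) * x⁻¹ +
          (1 + e2) * (e2 * Real.log x ^ (e2 - 1) * x⁻¹))) -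
       K * (e2 * Real.log x ^ (e2 - 1) * x⁻¹)) x := by
    intro x hx
    obtain ⟨hx1, hxR₀, hL1, _⟩ := hfacts x hx
    have hG := gDeriv (1 + e2) hx1
    have hGd : HasDerivAt
        (fun r => Real.log r ^ (1 + e2) + (1 + e2) * Real.log r ^ e2)
        ((1 + e2) * Real.log x ^ ((1 + e2) - 1) * x⁻¹ +
          (1 + e2) * (e2 * Real.log x ^ (e2 - 1) * x⁻¹)) x :=
      (logRpowDeriv (1 + e2) hx1).add ((logRpowDeriv e2 hx1).const_mul (1 + e2))
    exact (((hd2 x hxR₀).mul hG).sub ((hd1 x hxR₀).mul hGd)).sub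
      ((logRpowDeriv e2 hx1).const_mul K)
  have hΨmono : MonotoneOn
      (fun r => f' r * (r * Real.log r ^ (1 + e2)) -
        f r * (Real.log r ^ (1 + e2) + (1 + e2) * Real.log r ^ e2) -
        K * Real.log r ^ e2) (Ici R₂) := by
    apply monoOn_of_hasDerivAt hΨderiv
    intro x hx
    obtain ⟨hx1, hxR₀, hL1, _⟩ := hfacts x hx
    have hLpos : 0 < Real.log x := Real.log_pos hx1
    have hk := key x hx
    have hodex := hode x hxR₀
    have hE : Real.log x ^ ((1 + e2) - 1) = Real.log x ^ e2 := by
      norm_num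
    rw [hE, hodex]
    have hKq : K * (e2 * Real.log x ^ (e2 - 1) * x⁻¹)
        = m * δ * (Real.log x ^ (e2 - 1) * x⁻¹) := by
      rw [← hKe2]; ring
    rw [hKq]
    linarith [hk]

  -- φ is monotone
  have hφmono : ∀ x y, R₂ ≤ x → x ≤ y → K * Real.log x ^ e2 ≤ K * Real.log y ^ e2 := by
    intro x y hx hxy
    have h1 : (0:ℝ) ≤ Real.log x := by have := (hfacts x hx).2.2.1; linarith
    have h2 := Real.rpow_le_rpow h1
      (Real.log_le_log (by linarith [(hfacts x hx).1]) hxy) he2pos.le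
    exact mul_le_mul_of_nonneg_left h2 hKpos.le
  -- choose ρ with W ρ ≥ 0 (and hence W ≥ 0 on [ρ, ∞))
  have htend : Tendsto (fun r => K * Real.log r ^ e2) atTop atTop :=
    Tendsto.const_mul_atTop hKpos
      ((tendsto_rpow_atTop he2pos).comp Real.tendsto_log_atTop)
  obtain ⟨ρ, hρ1, hρ2⟩ : ∃ ρ, R₂ ≤ ρ ∧
      K * Real.log R₂ ^ e2 -
        (f' R₂ * (R₂ * Real.log R₂ ^ (1 + e2)) -
          f R₂ * (Real.log R₂ ^ (1 + e2) + (1 + e2) * Real.log R₂ ^ e2)) ≤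
        K * Real.log ρ ^ e2 := by
    obtain ⟨ρ, h⟩ := ((eventually_ge_atTop R₂).and (htend.eventually_ge_atTop _)).exists
    exact ⟨ρ, h.1, h.2⟩
  have hWnonneg : ∀ x, ρ ≤ x →
      0 ≤ f' x * (x * Real.log x ^ (1 + e2)) -
        f x * (Real.log x ^ (1 + e2) + (1 + e2) * Real.log x ^ e2) := by
    intro x hx
    have hxR₂ : R₂ ≤ x := le_trans hρ1 hx
    have h1 := hΨmono self_mem_Ici (mem_Ici.mpr hxR₂) hxR₂
    simp only at h1
    have h2 := hφmono ρ x hρ1 hx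
    linarith [hρ2, h1, h2]
  -- f/G is monotone on [ρ, ∞)
  have hρR₀ : R₀ ≤ ρ := le_trans hR₂R₀ hρ1
  have hρgt1 : 1 < ρ := lt_of_lt_of_le hR₂1 hρ1
  have hGpos : ∀ x, ρ ≤ x → 0 < x * Real.log x ^ (1 + e2) := by
    intro x hx
    have hx1 : 1 < x := lt_of_lt_of_le hρgt1 hx
    have hL := Real.log_pos hx1
    positivity
  have hFmono : MonotoneOn (fun r => f r / (r * Real.log r ^ (1 + e2))) (Ici ρ) := by
    apply monoOn_of_hasDerivAt
      (F' := fun x => (f' x * (x * Real.log x ^ (1 + e2)) -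
        f x * (Real.log x ^ (1 + e2) + (1 + e2) * Real.log x ^ ((1 + e2) - 1))) /
        (x * Real.log x ^ (1 + e2)) ^ 2)
    · intro x hx
      have hx1 : 1 < x := lt_of_lt_of_le hρgt1 hx
      exact (hd1 x (le_trans hρR₀ hx)).div (gDeriv (1 + e2) hx1)
        (ne_of_gt (hGpos x hx))
    · intro x hx
      have hE : Real.log x ^ ((1 + e2) - 1) = Real.log x ^ e2 := by norm_num
      rw [hE]
      exact div_nonneg (hWnonneg x hx) (by positivity)
  have hcpos : 0 < f ρ / (ρ * Real.log ρ ^ (1 + e2)) :=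
    div_pos (hpos ρ hρR₀) (hGpos ρ le_rfl)
  have hfc : ∀ x, ρ ≤ x →
      f ρ / (ρ * Real.log ρ ^ (1 + e2)) * (x * Real.log x ^ (1 + e2)) ≤ f x := by
    intro x hx
    have h1 := hFmono self_mem_Ici (mem_Ici.mpr hx) hx
    simp only at h1
    exact (le_div_iff₀ (hGpos x hx)).1 h1
  -- final choice of R₁
  have htend2 : Tendsto
      (fun r => f ρ / (ρ * Real.log ρ ^ (1 + e2)) * Real.log r ^ (e2 - ε'))
      atTop atTop :=
    Tendsto.const_mul_atTop hcpos
      ((tendsto_rpow_atTop (by linarith : (0:ℝ) < e2 - ε')).comp Real.tendsto_log_atTop)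
  obtain ⟨b, hb⟩ := eventually_atTop.1 (htend2.eventually_ge_atTop 1)
  refine ⟨max b ρ, le_trans hρR₀ (le_max_right _ _), ?_⟩
  intro r hr
  have hrρ : ρ ≤ r := le_trans (le_max_right _ _) hr
  have hr1 : 1 < r := lt_of_lt_of_le hρgt1 hrρ
  have hLpos : 0 < Real.log r := Real.log_pos hr1
  have h1 : 1 ≤ f ρ / (ρ * Real.log ρ ^ (1 + e2)) * Real.log r ^ (e2 - ε') :=
    hb r (le_trans (le_max_left _ _) hr)
  have h2 := hfc r hrρ
  have hsplit : Real.log r ^ (e2 - ε') * Real.log r ^ (1 + ε')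
      = Real.log r ^ (1 + e2) := by
    rw [← Real.rpow_add hLpos]
    congr 1
    ring
  have hr0 : (0:ℝ) < r := by linarith
  calc r * Real.log r ^ (1 + ε')
      ≤ (f ρ / (ρ * Real.log ρ ^ (1 + e2)) * Real.log r ^ (e2 - ε')) *
        (r * Real.log r ^ (1 + ε')) := le_mul_of_one_le_left (by positivity) h1
    _ = f ρ / (ρ * Real.log ρ ^ (1 + e2)) *
        (r * (Real.log r ^ (e2 - ε') * Real.log r ^ (1 + ε'))) := by ring
    _ = f ρ / (ρ * Real.log ρ ^ (1 + e2)) * (r * Real.log r ^ (1 + e2)) := by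
        rw [hsplit]
    _ ≤ f r := h2
end

section
/- Let κ = n/(n-1) for an integer n ≥ 2, and let (Iⱼ)_{j≥0} be a sequence of nonnegative reals satisfying I_{j+1} ≤ C^{1/κʲ} κ^{j/κʲ} Iⱼ for all j ≥ 0, where C ≥ 1. Then limsup_{j→∞} Iⱼ ≤ Cⁿ κ^S I₀, where S = Σ_{j=0}^∞ j κ^{-j} < ∞. -/
open Real Filter

theorem stmt_11 (n : ℕ) (hn : 2 ≤ n) (C : ℝ) (hC : 1 ≤ C) (I : ℕ → ℝ)
    (hI : ∀ j, 0 ≤ I j)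
    (hrec : ∀ j : ℕ, I (j + 1) ≤
      C ^ (1 / ((n : ℝ) / ((n : ℝ) - 1)) ^ j)
        * ((n : ℝ) / ((n : ℝ) - 1)) ^ ((j : ℝ) / ((n : ℝ) / ((n : ℝ) - 1)) ^ j) * I j) :
    Summable (fun j : ℕ => (j : ℝ) * ((n : ℝ) / ((n : ℝ) - 1)) ^ (-(j : ℝ))) ∧
      Filter.limsup I Filter.atTop ≤
        C ^ (n : ℝ) *
          ((n : ℝ) / ((n : ℝ) - 1)) ^ (∑' j : ℕ, (j : ℝ) * ((n : ℝ) / ((n : ℝ) - 1)) ^ (-(j : ℝ)))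
          * I 0 := by
  set κ : ℝ := (n : ℝ) / ((n : ℝ) - 1) with hκdef
  have hn1 : (1 : ℝ) ≤ (n : ℝ) - 1 := by
    have : (2 : ℝ) ≤ (n : ℝ) := by exact_mod_cast hn
    linarith
  have hn1pos : (0 : ℝ) < (n : ℝ) - 1 := by linarith
  have hκ1 : 1 < κ := by
    rw [hκdef, lt_div_iff₀ hn1pos]
    linarith
  have hκ0 : 0 < κ := by linarith
  have hC0 : 0 < C := by linarith
  have hr : ∀ j : ℕ, κ ^ (-(j : ℝ)) = (κ⁻¹) ^ j := by
    intro j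
    rw [Real.rpow_neg hκ0.le, Real.rpow_natCast, inv_pow]
  have hinv0 : 0 ≤ κ⁻¹ := inv_nonneg.2 hκ0.le
  have hinv1 : κ⁻¹ < 1 := inv_lt_one_of_one_lt₀ hκ1
  have hsum : Summable (fun j : ℕ => (j : ℝ) * κ⁻¹ ^ j) := by
    have := summable_pow_mul_geometric_of_norm_lt_one (R := ℝ) (k := 1)
      (r := κ⁻¹) (by rw [Real.norm_eq_abs, abs_of_nonneg hinv0]; exact hinv1)
    simpa using this
  have hsum' : Summable (fun j : ℕ => (j : ℝ) * κ ^ (-(j : ℝ))) := by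
    simpa only [hr] using hsum
  refine ⟨hsum', ?_⟩
  set S : ℝ := ∑' j : ℕ, (j : ℝ) * κ ^ (-(j : ℝ)) with hSdef
  -- key induction
  have key : ∀ j : ℕ, I j ≤
      C ^ (∑ k ∈ Finset.range j, (1 / κ ^ k)) *
        κ ^ (∑ k ∈ Finset.range j, ((k : ℝ) / κ ^ k)) * I 0 := by
    intro j
    induction j with
    | zero => simp
    | succ j ih =>
      have h1 : (0:ℝ) ≤ C ^ (1 / κ ^ j) * κ ^ ((j : ℝ) / κ ^ j) :=
        mul_nonneg (Real.rpow_nonneg hC0.le _) (Real.rpow_nonneg hκ0.le _)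
      calc I (j + 1) ≤ C ^ (1 / κ ^ j) * κ ^ ((j : ℝ) / κ ^ j) * I j := hrec j
        _ ≤ C ^ (1 / κ ^ j) * κ ^ ((j : ℝ) / κ ^ j) *
            (C ^ (∑ k ∈ Finset.range j, (1 / κ ^ k)) *
              κ ^ (∑ k ∈ Finset.range j, ((k : ℝ) / κ ^ k)) * I 0) :=
          mul_le_mul_of_nonneg_left ih h1
        _ = C ^ (∑ k ∈ Finset.range (j+1), (1 / κ ^ k)) *
              κ ^ (∑ k ∈ Finset.range (j+1), ((k : ℝ) / κ ^ k)) * I 0 := by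
          rw [Finset.sum_range_succ, Finset.sum_range_succ,
            Real.rpow_add hC0, Real.rpow_add hκ0]
          ring
  -- exponent bounds
  have hrewrite : ∀ k : ℕ, (1 : ℝ) / κ ^ k = κ⁻¹ ^ k := by
    intro k; rw [one_div, inv_pow]
  have hA : ∀ j : ℕ, (∑ k ∈ Finset.range j, (1 / κ ^ k)) ≤ (n : ℝ) := by
    intro j
    have hsumg : Summable (fun k : ℕ => κ⁻¹ ^ k) := summable_geometric_of_lt_one hinv0 hinv1
    have h1 : (∑ k ∈ Finset.range j, (1 / κ ^ k)) ≤ ∑' k : ℕ, κ⁻¹ ^ k := by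
      simp only [hrewrite]
      exact Summable.sum_le_tsum _ (fun k _ => pow_nonneg hinv0 k) hsumg
    have h2 : (∑' k : ℕ, κ⁻¹ ^ k) = (n : ℝ) := by
      rw [tsum_geometric_of_lt_one hinv0 hinv1]
      rw [hκdef]
      have hn0 : (n : ℝ) ≠ 0 := by positivity
      field_simp
      ring
    linarith
  have hB : ∀ j : ℕ, (∑ k ∈ Finset.range j, ((k : ℝ) / κ ^ k)) ≤ S := by
    intro j
    have : (∑ k ∈ Finset.range j, ((k : ℝ) / κ ^ k)) ≤ ∑' k : ℕ, (k : ℝ) * κ⁻¹ ^ k := by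
      have : ∀ k : ℕ, (k : ℝ) / κ ^ k = (k : ℝ) * κ⁻¹ ^ k := by
        intro k; rw [div_eq_mul_inv, inv_pow]
      simp only [this]
      exact Summable.sum_le_tsum _ (fun k _ => mul_nonneg (Nat.cast_nonneg k) (pow_nonneg hinv0 k)) hsum
    have hS : S = ∑' k : ℕ, (k : ℝ) * κ⁻¹ ^ k := by
      rw [hSdef]; simp only [hr]
    linarith [hS ▸ this]
  -- final bound
  have hbound : ∀ j : ℕ, I j ≤ C ^ (n : ℝ) * κ ^ S * I 0 := by
    intro j
    refine (key j).trans ?_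
    have h1 : C ^ (∑ k ∈ Finset.range j, (1 / κ ^ k)) ≤ C ^ (n : ℝ) :=
      Real.rpow_le_rpow_of_exponent_le hC (hA j)
    have h2 : κ ^ (∑ k ∈ Finset.range j, ((k : ℝ) / κ ^ k)) ≤ κ ^ S :=
      Real.rpow_le_rpow_of_exponent_le hκ1.le (hB j)
    have := mul_le_mul h1 h2 (Real.rpow_nonneg hκ0.le _) (Real.rpow_nonneg hC0.le _)
    exact mul_le_mul_of_nonneg_right this (hI 0)
  have hcobdd : IsCoboundedUnder (· ≤ ·) atTop I :=
    Filter.isCoboundedUnder_le_of_le atTop (fun j => hI j)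
  exact Filter.limsup_le_of_le hcobdd (Filter.Eventually.of_forall hbound)
end

section
/- Let H : [0,∞) → [0,∞) be a homeomorphism with H(t) = (log(1/t))^{-1} (log log(1/t))^{-λ} for all sufficiently small t > 0, where λ > 1. Define G(t) = ∫₀ᵗ H(s) ds. Then ∫₀¹ dt/G⁻¹(t) < ∞. -/
open Real Set MeasureTheory Filter Topology

theorem stmt_17 (lam : ℝ) (hlam : 1 < lam) (H G Ginv : ℝ → ℝ)
    (hHnn : ∀ t ≥ (0 : ℝ), 0 ≤ H t)
    (hHmono : StrictMonoOn H (Set.Ici 0))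
    (hHcont : ContinuousOn H (Set.Ici 0))
    (hH0 : H 0 = 0)
    (hHsurj : Set.SurjOn H (Set.Ici 0) (Set.Ici 0))
    (hsmall : ∃ δ > (0 : ℝ), ∀ t ∈ Set.Ioo (0 : ℝ) δ,
      H t = (Real.log (1 / t))⁻¹ * (Real.log (Real.log (1 / t))) ^ (-lam))
    (hG : ∀ t ≥ (0 : ℝ), G t = ∫ s in (0 : ℝ)..t, H s)
    (hGinv1 : ∀ t ≥ (0 : ℝ), Ginv (G t) = t)
    (hGinv2 : ∀ t ≥ (0 : ℝ), G (Ginv t) = t)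
    (hGinvnn : ∀ t ≥ (0 : ℝ), 0 ≤ Ginv t) :
    MeasureTheory.IntegrableOn (fun t => 1 / Ginv t) (Set.Ioc (0 : ℝ) 1) := by
  obtain ⟨δ, hδ, hsm⟩ := hsmall
  have hlam1 : lam - 1 ≠ 0 := by linarith
  -- G 0 = 0
  have hG0 : G 0 = 0 := by simpa using hG 0 le_rfl
  -- interval integrability of H
  have hHint : ∀ x y : ℝ, 0 ≤ x → 0 ≤ y → IntervalIntegrable H volume x y := by
    intro x y hx hy
    apply ContinuousOn.intervalIntegrable
    apply hHcont.mono
    intro t ht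
    rcases le_total x y with h | h
    · rw [uIcc_of_le h] at ht; exact le_trans hx ht.1
    · rw [uIcc_of_ge h] at ht; exact le_trans hy ht.1
  -- strict monotonicity of G on [0, ∞)
  have hGmono : StrictMonoOn G (Set.Ici 0) := by
    intro x hx y hy hxy
    have hx' : (0:ℝ) ≤ x := hx
    have hy' : (0:ℝ) ≤ y := hy
    have h1 : G x + ∫ s in x..y, H s = G y := by
      rw [hG x hx', hG y hy']
      exact intervalIntegral.integral_add_adjacent_intervals (hHint 0 x le_rfl hx')
        (hHint x y hx' hy')
    have h2 : 0 < ∫ s in x..y, H s := by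
      apply intervalIntegral.intervalIntegral_pos_of_pos_on (hHint x y hx' hy')
      · intro t ht
        have := hHmono (le_refl (0:ℝ)) (le_of_lt (lt_of_le_of_lt hx' ht.1) : t ∈ Set.Ici 0)
          (lt_of_le_of_lt hx' ht.1)
        rwa [hH0] at this
      · exact hxy
    linarith
  -- positivity of Ginv on (0, ∞)
  have hGinvPos : ∀ t : ℝ, 0 < t → 0 < Ginv t := by
    intro t ht
    rcases lt_or_eq_of_le (hGinvnn t ht.le) with h | h
    · exact h
    · exfalso
      have := hGinv2 t ht.le
      rw [← h, hG0] at this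
      linarith
  -- monotonicity of Ginv on [0, ∞)
  have hGinvMono : ∀ s t : ℝ, 0 ≤ s → s ≤ t → Ginv s ≤ Ginv t := by
    intro s t hs hst
    by_contra hcon
    push_neg at hcon
    have := hGmono (hGinvnn t (hs.trans hst)) (hGinvnn s hs) hcon
    rw [hGinv2 s hs, hGinv2 t (hs.trans hst)] at this
    linarith
  -- derivative of G
  have hGderiv : ∀ x : ℝ, 0 < x → HasDerivAt G (H x) x := by
    intro x hx
    have hF : HasDerivAt (fun u => ∫ s in (0:ℝ)..u, H s) (H x) x :=
      intervalIntegral.integral_hasDerivAt_right (hHint 0 x le_rfl hx.le)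
        (ContinuousOn.stronglyMeasurableAtFilter isOpen_Ioi
          (hHcont.mono Ioi_subset_Ici_self) x hx)
        (hHcont.continuousAt (Ici_mem_nhds hx))
    apply hF.congr_of_eventuallyEq
    filter_upwards [Ioi_mem_nhds hx] with t ht
    exact hG t (le_of_lt ht)
  -- choice of small a
  set a : ℝ := min (δ/2) (Real.exp (-Real.exp 1)/2) with ha_def
  have ha0 : 0 < a := lt_min (by linarith) (by positivity)
  have haδ : a < δ := lt_of_le_of_lt (min_le_left _ _) (by linarith)
  have hae : a < Real.exp (-Real.exp 1) :=
    lt_of_le_of_lt (min_le_right _ _) (by linarith [Real.exp_pos (-Real.exp 1)])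
  -- key logarithm facts
  have key : ∀ x : ℝ, 0 < x → x ≤ a →
      Real.exp 1 < Real.log x⁻¹ ∧ 0 < Real.log (Real.log x⁻¹) := by
    intro x hx0 hxa
    have hxe : x < Real.exp (-Real.exp 1) := lt_of_le_of_lt hxa hae
    have h2 : Real.exp (Real.exp 1) * x < 1 := by
      calc Real.exp (Real.exp 1) * x
          < Real.exp (Real.exp 1) * Real.exp (-Real.exp 1) := by
            exact mul_lt_mul_of_pos_left hxe (Real.exp_pos _)
        _ = 1 := by rw [← Real.exp_add]; simp
    have h1 : Real.exp (Real.exp 1) < x⁻¹ := by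
      rw [show x⁻¹ = 1/x from (one_div x).symm, lt_div_iff₀ hx0]
      exact h2
    have hL : Real.exp 1 < Real.log x⁻¹ := by
      have := Real.log_lt_log (Real.exp_pos _) h1
      rwa [Real.log_exp] at this
    have hLL : 0 < Real.log (Real.log x⁻¹) := by
      have := Real.log_lt_log (Real.exp_pos 1) hL
      rw [Real.log_exp] at this
      linarith
    exact ⟨hL, hLL⟩
  -- auxiliary antiderivative
  set g : ℝ → ℝ := fun x => (lam - 1)⁻¹ * (Real.log (Real.log x⁻¹)) ^ (1 - lam) with hg_def
  have hg0 : g 0 = 0 := by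
    simp only [hg_def]
    rw [inv_zero, Real.log_zero, Real.log_zero, Real.zero_rpow (by linarith : (1:ℝ) - lam ≠ 0),
      mul_zero]
  -- derivative of g
  have hgderiv : ∀ x ∈ Set.Ioo (0:ℝ) a, HasDerivAt g (H x * (1/x)) x := by
    intro x hx
    obtain ⟨hx0, hxa⟩ := hx
    obtain ⟨hL, hLL⟩ := key x hx0 hxa.le
    have hL0 : 0 < Real.log x⁻¹ := lt_trans (Real.exp_pos 1) hL
    have hsmx : H x = (Real.log x⁻¹)⁻¹ * (Real.log (Real.log x⁻¹)) ^ (-lam) := by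
      have := hsm x ⟨hx0, lt_trans hxa haδ⟩
      rwa [one_div] at this
    have d1 : HasDerivAt (fun y : ℝ => y⁻¹) (-(x^2)⁻¹) x := hasDerivAt_inv hx0.ne'
    have d2 : HasDerivAt (fun y : ℝ => Real.log y⁻¹) (-(x^2)⁻¹ / x⁻¹) x :=
      d1.log (inv_ne_zero hx0.ne')
    have d3 : HasDerivAt (fun y : ℝ => Real.log (Real.log y⁻¹))
        (-(x^2)⁻¹ / x⁻¹ / Real.log x⁻¹) x := d2.log hL0.ne'
    have d4 : HasDerivAt (fun y : ℝ => (Real.log (Real.log y⁻¹)) ^ (1 - lam))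
        (-(x^2)⁻¹ / x⁻¹ / Real.log x⁻¹ * (1 - lam) *
          (Real.log (Real.log x⁻¹)) ^ (1 - lam - 1)) x :=
      d3.rpow_const (Or.inl hLL.ne')
    have d5 := d4.const_mul ((lam - 1)⁻¹)
    refine d5.congr_deriv (Eq.symm ?_)
    have e1 : -(x^2)⁻¹ / x⁻¹ = -x⁻¹ := by
      field_simp
    rw [hsmx, e1, show (1:ℝ) - lam - 1 = -lam by ring]
    field_simp
    ring
  -- continuity of g on [0, a]
  have hgcont : ContinuousOn g (Set.Icc 0 a) := by
    intro x hx
    rcases eq_or_lt_of_le hx.1 with h | h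
    · subst h
      have t1 : Tendsto (fun y : ℝ => Real.log (Real.log y⁻¹)) (𝓝[>] (0:ℝ)) atTop :=
        Real.tendsto_log_atTop.comp (Real.tendsto_log_atTop.comp tendsto_inv_nhdsGT_zero)
      have t2 : Tendsto (fun y : ℝ => (Real.log (Real.log y⁻¹)) ^ (1 - lam))
          (𝓝[>] (0:ℝ)) (𝓝 0) := by
        have := (tendsto_rpow_neg_atTop (by linarith : (0:ℝ) < lam - 1)).comp t1
        simpa [show -(lam - 1) = 1 - lam by ring, Function.comp_def] using this
      have t3 : Tendsto g (𝓝[>] (0:ℝ)) (𝓝 0) := by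
        have := t2.const_mul ((lam - 1)⁻¹)
        simpa [hg_def] using this
      have hcw : ContinuousWithinAt g (Set.Ici 0) 0 := by
        rw [← continuousWithinAt_Ioi_iff_Ici]
        unfold ContinuousWithinAt
        rw [hg0]
        exact t3
      exact hcw.mono Icc_subset_Ici_self
    · apply ContinuousAt.continuousWithinAt
      obtain ⟨hL, hLL⟩ := key x h hx.2
      have hL0 : 0 < Real.log x⁻¹ := lt_trans (Real.exp_pos 1) hL
      have c1 : ContinuousAt (fun y : ℝ => Real.log (Real.log y⁻¹)) x :=
        ((continuousAt_inv₀ h.ne').log (inv_ne_zero h.ne')).log hL0.ne'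
      exact continuousAt_const.mul (c1.rpow_const (Or.inl hLL.ne'))
  -- integrability of H x / x on (0, a]
  have hInt1 : IntegrableOn (fun x => H x * (1/x)) (Set.Ioc 0 a) := by
    apply intervalIntegral.integrableOn_deriv_of_nonneg hgcont hgderiv
    intro x hx
    exact mul_nonneg (hHnn x hx.1.le) (one_div_pos.mpr hx.1).le
  -- image of (0,a] under G
  have hGa : 0 < G a := by
    have := hGmono (le_refl (0:ℝ)) ha0.le ha0
    rwa [hG0] at this
  have himg : G '' (Set.Ioc 0 a) = Set.Ioc 0 (G a) := by
    ext t
    constructor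
    · rintro ⟨x, hx, rfl⟩
      constructor
      · have := hGmono (le_refl (0:ℝ)) hx.1.le hx.1
        rwa [hG0] at this
      · exact hGmono.monotoneOn hx.1.le ha0.le hx.2
    · rintro ⟨ht0, hta⟩
      refine ⟨Ginv t, ⟨hGinvPos t ht0, ?_⟩, hGinv2 t ht0.le⟩
      by_contra hcon
      push_neg at hcon
      have := hGmono ha0.le (hGinvnn t ht0.le) hcon
      rw [hGinv2 t ht0.le] at this
      linarith
  -- change of variables
  have hsub := MeasureTheory.integrableOn_image_iff_integrableOn_abs_deriv_smul
    measurableSet_Ioc (fun x hx => (hGderiv x hx.1).hasDerivWithinAt)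
    (hGmono.injOn.mono (fun x hx => hx.1.le : Set.Ioc (0:ℝ) a ⊆ Set.Ici 0))
    (fun t => 1 / Ginv t)
  rw [himg] at hsub
  have hInt2 : IntegrableOn (fun t => 1 / Ginv t) (Set.Ioc 0 (G a)) := by
    apply hsub.mpr
    apply hInt1.congr_fun _ measurableSet_Ioc
    intro x hx
    show H x * (1 / x) = |H x| • (1 / Ginv (G x))
    rw [abs_of_nonneg (hHnn x hx.1.le), smul_eq_mul, hGinv1 x hx.1.le]
  -- tail integrability
  have hTail : IntegrableOn (fun t => 1 / Ginv t) (Set.Icc (G a) 1) := by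
    apply AntitoneOn.integrableOn_isCompact isCompact_Icc
    intro s hs t ht hst
    apply one_div_le_one_div_of_le (hGinvPos s (lt_of_lt_of_le hGa hs.1))
    exact hGinvMono s t (hGa.le.trans hs.1) hst
  apply (hInt2.union hTail).mono_set
  intro t ht
  rcases le_total t (G a) with h | h
  · exact Or.inl ⟨ht.1, h⟩
  · exact Or.inr ⟨h, ht.2⟩
end
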